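/- Let n ≥ 11 be an integer, p ≥ p_JL, and let σ = σ(n,p), L and v_∞ be as defined. Let b > 0 and ℓ ∈ (σ, n−σ). Let u₀ : ℝⁿ → ℝ be measurable with 0 ≤ u₀(x) ≤ v_∞(x) for all x ≠ 0 and v_∞(x) − b|x|^{−ℓ} ≤ u₀(x) for all |x| ≥ 1. Suppose u : (ℝⁿ∖{0})×(0,∞) → ℝ satisfies the comparison bound: there are constants C₀ > 0 and c > 1 such that for all t > 0 and x ≠ 0, 0 ≤ v_∞(x) − u(x,t) ≤ C₀·φ_σ(x,t)·∫_{ℝⁿ} φ_σ(y,t)·G(x−y, ct)·(v_∞(y) − u₀(y)) dy. Then there exists C > 0 such that for all t ≥ 1: sup_{0<|x|≤√t} |x|^σ·(v_∞(x) − u(x,t)) ≤ C·t^{−(ℓ−σ)/2} and sup_{|x|≥√t} (v_∞(x) − u(x,t)) ≤ C·t^{−ℓ/2}. -/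

import Mathlib

open Real MeasureTheory Set Metric

/-- The Gauss–Weierstrass heat kernel on `ℝⁿ`. -/
noncomputable def heatKernel (n : ℕ) (x : EuclideanSpace ℝ (Fin n)) (t : ℝ) : ℝ :=
  (4 * Real.pi * t) ^ (-(n : ℝ) / 2) * Real.exp (-‖x‖ ^ 2 / (4 * t))

/-- The weight `φ_σ(x,t) = (√t/|x|)^σ` for `|x| ≤ √t`, and `1` for `|x| ≥ √t`. -/
noncomputable def phiWeight (n : ℕ) (σ : ℝ) (x : EuclideanSpace ℝ (Fin n)) (t : ℝ) : ℝ :=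
  if ‖x‖ ≤ Real.sqrt t then (Real.sqrt t / ‖x‖) ^ σ else 1

lemma gauss_integrable (n : ℕ) {b : ℝ} (hb : 0 < b) :
    Integrable (fun v : EuclideanSpace ℝ (Fin n) => Real.exp (-b * ‖v‖ ^ 2)) := by
  have h := (GaussianFourier.integrable_cexp_neg_mul_sq_norm_add
      (V := EuclideanSpace ℝ (Fin n)) (b := (b : ℂ)) (by simpa using hb) 0 0).norm
  refine h.congr (Filter.Eventually.of_forall fun v => ?_)
  simp only [Complex.norm_exp]
  norm_num
  left
  norm_cast

lemma heatKernel_eq (n : ℕ) (z : EuclideanSpace ℝ (Fin n)) {s : ℝ} (hs : 0 < s) :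
    heatKernel n z s = (4 * Real.pi * s) ^ (-(n : ℝ) / 2) * Real.exp (-((4 * s)⁻¹) * ‖z‖ ^ 2) := by
  rw [heatKernel]
  congr 1
  rw [neg_div, div_eq_mul_inv, mul_comm, neg_mul]

lemma heatKernel_nonneg (n : ℕ) (z : EuclideanSpace ℝ (Fin n)) {s : ℝ} (hs : 0 < s) :
    0 ≤ heatKernel n z s :=
  mul_nonneg (Real.rpow_nonneg (by positivity) _) (Real.exp_nonneg _)

lemma heatKernel_le (n : ℕ) (z : EuclideanSpace ℝ (Fin n)) {s : ℝ} (hs : 0 < s) :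
    heatKernel n z s ≤ (4 * Real.pi * s) ^ (-(n : ℝ) / 2) := by
  rw [heatKernel]
  have h1 : Real.exp (-‖z‖ ^ 2 / (4 * s)) ≤ 1 := by
    rw [Real.exp_le_one_iff]
    have : (0:ℝ) ≤ ‖z‖ ^ 2 / (4 * s) := by positivity
    linarith [neg_div (4*s) (‖z‖^2)]
  calc (4 * Real.pi * s) ^ (-(n : ℝ) / 2) * Real.exp (-‖z‖ ^ 2 / (4 * s))
      ≤ (4 * Real.pi * s) ^ (-(n : ℝ) / 2) * 1 :=
        mul_le_mul_of_nonneg_left h1 (Real.rpow_nonneg (by positivity) _)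
    _ = _ := mul_one _

lemma heatKernel_integrable (n : ℕ) (x : EuclideanSpace ℝ (Fin n)) {s : ℝ} (hs : 0 < s) :
    Integrable (fun y : EuclideanSpace ℝ (Fin n) => heatKernel n (x - y) s) := by
  have hb : (0:ℝ) < (4 * s)⁻¹ := by positivity
  have h := ((gauss_integrable n hb).comp_sub_left x).const_mul
      ((4 * Real.pi * s) ^ (-(n : ℝ) / 2))
  refine h.congr (Filter.Eventually.of_forall fun y => ?_)
  simp only [heatKernel_eq n (x - y) hs]

lemma heatKernel_lintegral (n : ℕ) (x : EuclideanSpace ℝ (Fin n)) {s : ℝ} (hs : 0 < s) :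
    ∫⁻ y, ENNReal.ofReal (heatKernel n (x - y) s) = 1 := by
  rw [← MeasureTheory.ofReal_integral_eq_lintegral_ofReal (heatKernel_integrable n x hs)
      (Filter.Eventually.of_forall fun y => heatKernel_nonneg n _ hs)]
  have hb : (0:ℝ) < (4 * s)⁻¹ := by positivity
  have hint : ∫ y, heatKernel n (x - y) s = 1 := by
    have h1 : ∀ y : EuclideanSpace ℝ (Fin n), heatKernel n (x - y) s
        = (4 * Real.pi * s) ^ (-(n : ℝ) / 2) * Real.exp (-((4 * s)⁻¹) * ‖x - y‖ ^ 2) :=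
      fun y => heatKernel_eq n _ hs
    rw [show (fun y : EuclideanSpace ℝ (Fin n) => heatKernel n (x - y) s)
        = fun y => (4 * Real.pi * s) ^ (-(n : ℝ) / 2)
          * Real.exp (-((4 * s)⁻¹) * ‖x - y‖ ^ 2) from funext h1]
    rw [MeasureTheory.integral_const_mul]
    rw [integral_sub_left_eq_self
      (fun z : EuclideanSpace ℝ (Fin n) => Real.exp (-((4 * s)⁻¹) * ‖z‖ ^ 2)) volume x]
    rw [GaussianFourier.integral_rexp_neg_mul_sq_norm hb]
    rw [show Real.pi / (4 * s)⁻¹ = 4 * Real.pi * s by field_simp]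
    rw [finrank_euclideanSpace_fin]
    rw [← Real.rpow_add (by positivity), neg_div, neg_add_cancel, Real.rpow_zero]
  rw [hint, ENNReal.ofReal_one]

lemma lintegral_closedBall_rpow (n : ℕ) {a R : ℝ} (h0 : 0 < a) (han : a < n) (hR : 0 < R) :
    ∫⁻ y in Metric.closedBall (0 : EuclideanSpace ℝ (Fin n)) R, ENNReal.ofReal (‖y‖ ^ (-a)) ≤
      ENNReal.ofReal (R ^ ((n : ℝ) - a) * (1 + a / ((n : ℝ) - a))) *
        volume (Metric.ball (0 : EuclideanSpace ℝ (Fin n)) 1) := by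
  set E := EuclideanSpace ℝ (Fin n)
  set vB := volume (Metric.ball (0 : E) 1) with hvB
  set T := R ^ (-a) with hT
  have hTpos : 0 < T := Real.rpow_pos_of_pos hR _
  have hμ : AEMeasurable (fun y : E => ‖y‖ ^ (-a)) (volume.restrict (closedBall (0:E) R)) := by
    fun_prop
  have ha : a ≠ 0 := h0.ne'
  have hna : (0:ℝ) < (n:ℝ) - a := by linarith
  rw [lintegral_eq_lintegral_meas_le _
      (Filter.Eventually.of_forall fun y => Real.rpow_nonneg (norm_nonneg y) _) hμ]
  have key : ∫⁻ t in Ioi (0:ℝ),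
      volume.restrict (closedBall (0:E) R) {y : E | t ≤ ‖y‖ ^ (-a)} ≤
      ENNReal.ofReal (R ^ ((n:ℝ) - a)) * vB
        + ENNReal.ofReal (R ^ ((n:ℝ) - a) * (a / ((n:ℝ) - a))) * vB := by
    calc ∫⁻ t in Ioi (0:ℝ), volume.restrict (closedBall (0:E) R) {y : E | t ≤ ‖y‖ ^ (-a)}
        ≤ ∫⁻ t in Ioc (0:ℝ) T ∪ Ioi T,
            volume.restrict (closedBall (0:E) R) {y : E | t ≤ ‖y‖ ^ (-a)} :=
          lintegral_mono_set Ioi_subset_Ioc_union_Ioi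
      _ ≤ (∫⁻ t in Ioc (0:ℝ) T,
            volume.restrict (closedBall (0:E) R) {y : E | t ≤ ‖y‖ ^ (-a)})
          + ∫⁻ t in Ioi T,
            volume.restrict (closedBall (0:E) R) {y : E | t ≤ ‖y‖ ^ (-a)} :=
          lintegral_union_le _ _ _
      _ ≤ ENNReal.ofReal (R ^ ((n:ℝ) - a)) * vB
          + ENNReal.ofReal (R ^ ((n:ℝ) - a) * (a / ((n:ℝ) - a))) * vB := by
          gcongr
          · -- small t part
            calc ∫⁻ t in Ioc (0:ℝ) T,
                  volume.restrict (closedBall (0:E) R) {y : E | t ≤ ‖y‖ ^ (-a)}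
                ≤ ∫⁻ _t in Ioc (0:ℝ) T, volume (closedBall (0:E) R) := by
                  refine lintegral_mono fun t => ?_
                  calc volume.restrict (closedBall (0:E) R) {y : E | t ≤ ‖y‖ ^ (-a)}
                      ≤ volume.restrict (closedBall (0:E) R) univ :=
                        measure_mono (subset_univ _)
                    _ = volume (closedBall (0:E) R) := by
                        rw [Measure.restrict_apply_univ]
              _ = volume (closedBall (0:E) R) * volume (Ioc (0:ℝ) T) :=
                  setLIntegral_const _ _
              _ = ENNReal.ofReal (R ^ ((n:ℝ) - a)) * vB := by
                  rw [Measure.addHaar_closedBall _ _ hR.le, Real.volume_Ioc, sub_zero,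
                    finrank_euclideanSpace_fin]
                  rw [mul_comm (ENNReal.ofReal (R ^ n)) vB, mul_assoc,
                    ← ENNReal.ofReal_mul (by positivity), mul_comm vB, hT,
                    ← Real.rpow_natCast R n, ← Real.rpow_add hR]
                  rw [sub_eq_add_neg]
          · -- large t part
            have hsub : ∀ t ∈ Ioi T,
                volume.restrict (closedBall (0:E) R) {y : E | t ≤ ‖y‖ ^ (-a)} ≤
                  ENNReal.ofReal ((t ^ (-a⁻¹ * (n:ℝ)))) * vB := by
              intro t ht
              have htpos : 0 < t := hTpos.trans ht
              have hss : {y : E | t ≤ ‖y‖ ^ (-a)} ⊆ closedBall (0:E) (t ^ (-a⁻¹)) := by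
                intro y hy
                simp only [mem_setOf_eq] at hy
                have hy0 : 0 < ‖y‖ := by
                  rcases eq_or_lt_of_le (norm_nonneg y) with h | h
                  · exfalso
                    rw [← h, Real.zero_rpow (by simpa using ha)] at hy
                    exact absurd (htpos.trans_le hy) (lt_irrefl _)
                  · exact h
                rw [mem_closedBall_zero_iff]
                have := Real.rpow_le_rpow_of_nonpos htpos hy
                  (by simp [inv_nonneg, h0.le] : -a⁻¹ ≤ 0)
                rwa [← Real.rpow_mul (norm_nonneg y), neg_mul_neg,
                  mul_inv_cancel₀ ha, Real.rpow_one] at this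
              calc volume.restrict (closedBall (0:E) R) {y : E | t ≤ ‖y‖ ^ (-a)}
                  ≤ volume {y : E | t ≤ ‖y‖ ^ (-a)} := Measure.restrict_le_self _
                _ ≤ volume (closedBall (0:E) (t ^ (-a⁻¹))) := measure_mono hss
                _ = ENNReal.ofReal (t ^ (-a⁻¹ * (n:ℝ))) * vB := by
                    rw [Measure.addHaar_closedBall _ _ (Real.rpow_nonneg htpos.le _),
                      finrank_euclideanSpace_fin, ← Real.rpow_natCast (t ^ (-a⁻¹)) n,
                      ← Real.rpow_mul htpos.le]
            calc ∫⁻ t in Ioi T,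
                  volume.restrict (closedBall (0:E) R) {y : E | t ≤ ‖y‖ ^ (-a)}
                ≤ ∫⁻ t in Ioi T, ENNReal.ofReal ((t ^ (-a⁻¹ * (n:ℝ)))) * vB :=
                  setLIntegral_mono' measurableSet_Ioi hsub
              _ = (∫⁻ t in Ioi T, ENNReal.ofReal ((t ^ (-a⁻¹ * (n:ℝ))))) * vB :=
                  lintegral_mul_const' _ _ measure_ball_lt_top.ne
              _ ≤ ENNReal.ofReal (R ^ ((n:ℝ) - a) * (a / ((n:ℝ) - a))) * vB := by
                  gcongr
                  have he : -a⁻¹ * (n:ℝ) < -1 := by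
                    rw [neg_mul, neg_lt_neg_iff, lt_inv_mul_iff₀ h0]
                    linarith
                  have hint := integrableOn_Ioi_rpow_of_lt he hTpos
                  rw [← MeasureTheory.ofReal_integral_eq_lintegral_ofReal hint
                    ((ae_restrict_iff' measurableSet_Ioi).2 (Filter.Eventually.of_forall
                      fun t ht => Real.rpow_nonneg (hTpos.trans ht).le _))]
                  rw [integral_Ioi_rpow_of_lt he hTpos]
                  apply ENNReal.ofReal_le_ofReal
                  have he1 : -a⁻¹ * (n:ℝ) + 1 < 0 := by linarith
                  rw [hT, ← Real.rpow_mul hR.le]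
                  have hexp : -a * (-a⁻¹ * (n:ℝ) + 1) = (n:ℝ) - a := by
                    field_simp
                    ring
                  rw [hexp]
                  rw [div_le_iff_of_neg he1]
                  rw [show R ^ ((n:ℝ) - a) * (a / ((n:ℝ) - a)) * (-a⁻¹ * (n:ℝ) + 1)
                      = R ^ ((n:ℝ) - a) * ((a * (-a⁻¹ * (n:ℝ) + 1)) / ((n:ℝ) - a)) by ring]
                  have : a * (-a⁻¹ * (n:ℝ) + 1) = -((n:ℝ) - a) := by field_simp; ring
                  rw [this, show -((n:ℝ)-a)/((n:ℝ)-a) = -1 by field_simp]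
                  linarith [le_refl (R ^ ((n:ℝ) - a))]
  refine key.trans ?_
  rw [← add_mul]
  gcongr
  rw [show R ^ ((n:ℝ) - a) * (1 + a / ((n:ℝ) - a))
      = R ^ ((n:ℝ) - a) + R ^ ((n:ℝ) - a) * (a / ((n:ℝ) - a)) by ring]
  rw [ENNReal.ofReal_add (by positivity) (by positivity)]

lemma phiWeight_nonneg (n : ℕ) (σ : ℝ) (x : EuclideanSpace ℝ (Fin n)) (t : ℝ) :
    0 ≤ phiWeight n σ x t := by
  rw [phiWeight]
  split_ifs
  · exact Real.rpow_nonneg (by positivity) _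
  · exact zero_le_one

lemma phiWeight_measurable (n : ℕ) (σ t : ℝ) :
    Measurable (fun y : EuclideanSpace ℝ (Fin n) => phiWeight n σ y t) := by
  unfold phiWeight
  apply Measurable.ite
  · exact measurableSet_le measurable_norm measurable_const
  · fun_prop
  · exact measurable_const

lemma volume_singleton_zero (n : ℕ) (hn : n ≠ 0) :
    volume ({0} : Set (EuclideanSpace ℝ (Fin n))) = 0 := by
  have h := Measure.addHaar_closedBall (volume : Measure (EuclideanSpace ℝ (Fin n)))
    (0 : EuclideanSpace ℝ (Fin n)) (le_refl (0:ℝ))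
  rw [Metric.closedBall_zero, finrank_euclideanSpace_fin, zero_pow hn] at h
  simpa using h

lemma key_estimate (n : ℕ) (hn : 11 ≤ n) (σ q L b ℓ c : ℝ)
    (hσpos : 0 < σ) (hσle : σ ≤ ((n:ℝ) - 2)/2) (hq0 : 0 < q) (hqlt : q < ((n:ℝ) - 2)/2)
    (hσℓ : σ < ℓ) (hℓn : ℓ < (n:ℝ) - σ) (hb : 0 < b) (hc : 1 < c) (hL0 : 0 ≤ L)
    (vinf u₀ : EuclideanSpace ℝ (Fin n) → ℝ) (hu₀meas : Measurable u₀)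
    (hvinf : ∀ x, vinf x = L * ‖x‖ ^ (-q))
    (hu₀ : ∀ x, x ≠ 0 → 0 ≤ u₀ x ∧ u₀ x ≤ vinf x)
    (hu₀low : ∀ x, 1 ≤ ‖x‖ → vinf x - b * ‖x‖ ^ (-ℓ) ≤ u₀ x) :
    ∃ K, 0 ≤ K ∧ ∀ t ≥ (1:ℝ), ∀ x : EuclideanSpace ℝ (Fin n),
      (∫ y, phiWeight n σ y t * heatKernel n (x - y) (c * t) * (vinf y - u₀ y)) ≤
        K * t ^ (-ℓ/2) := by
  have hn' : (11:ℝ) ≤ (n:ℝ) := by exact_mod_cast hn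
  have hc0 : (0:ℝ) < c := lt_trans one_pos hc
  have hσq : σ + q < (n:ℝ) := by linarith
  have hσqpos : 0 < σ + q := by linarith
  have hℓ0 : 0 < ℓ := lt_trans hσpos hσℓ
  have hσℓn : σ + ℓ < (n:ℝ) := by linarith
  have hσℓpos : 0 < σ + ℓ := by linarith
  have hvBlt := (measure_ball_lt_top :
    volume (Metric.ball (0 : EuclideanSpace ℝ (Fin n)) 1) < ⊤)
  set vBr : ℝ := (volume (Metric.ball (0 : EuclideanSpace ℝ (Fin n)) 1)).toReal with hvBrdef
  have hvBr0 : 0 ≤ vBr := ENNReal.toReal_nonneg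
  have hvB : volume (Metric.ball (0 : EuclideanSpace ℝ (Fin n)) 1) = ENNReal.ofReal vBr :=
    (ENNReal.ofReal_toReal hvBlt.ne).symm
  set Gc0 : ℝ := (4 * Real.pi * c) ^ (-(n:ℝ)/2) with hGc0def
  have hGc0pos : 0 < Gc0 := Real.rpow_pos_of_pos (by positivity) _
  set K₁ : ℝ := Gc0 * L * ((1 + (σ+q)/((n:ℝ)-(σ+q))) * vBr) with hK₁def
  set K₂ : ℝ := Gc0 * b * ((1 + (σ+ℓ)/((n:ℝ)-(σ+ℓ))) * vBr) with hK₂def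
  have hpos₁ : (0:ℝ) ≤ 1 + (σ+q)/((n:ℝ)-(σ+q)) := by
    have : 0 ≤ (σ+q)/((n:ℝ)-(σ+q)) := div_nonneg hσqpos.le (by linarith)
    linarith
  have hpos₂ : (0:ℝ) ≤ 1 + (σ+ℓ)/((n:ℝ)-(σ+ℓ)) := by
    have : 0 ≤ (σ+ℓ)/((n:ℝ)-(σ+ℓ)) := div_nonneg hσℓpos.le (by linarith)
    linarith
  have hK₁0 : 0 ≤ K₁ :=
    mul_nonneg (mul_nonneg hGc0pos.le hL0) (mul_nonneg hpos₁ hvBr0)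
  have hK₂0 : 0 ≤ K₂ :=
    mul_nonneg (mul_nonneg hGc0pos.le hb.le) (mul_nonneg hpos₂ hvBr0)
  refine ⟨K₁ + K₂ + b, by linarith, ?_⟩
  intro t ht x
  have ht0 : (0:ℝ) < t := lt_of_lt_of_le one_pos ht
  have hst : (0:ℝ) < c * t := by positivity
  have hsqrt1 : (1:ℝ) ≤ Real.sqrt t := by
    rw [show (1:ℝ) = Real.sqrt 1 from Real.sqrt_one.symm]
    exact Real.sqrt_le_sqrt ht
  have hsq0 : (0:ℝ) < Real.sqrt t := lt_of_lt_of_le one_pos hsqrt1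
  have hvinfmeas : Measurable vinf := by
    rw [show vinf = fun x : EuclideanSpace ℝ (Fin n) => L * ‖x‖ ^ (-q) from funext hvinf]
    fun_prop
  have hGmeas : Measurable (fun y : EuclideanSpace ℝ (Fin n) => heatKernel n (x - y) (c*t)) := by
    unfold heatKernel
    fun_prop
  have hFmeas0 : Measurable (fun y : EuclideanSpace ℝ (Fin n) =>
      phiWeight n σ y t * heatKernel n (x - y) (c*t) * (vinf y - u₀ y)) :=
    ((phiWeight_measurable n σ t).mul hGmeas).mul (hvinfmeas.sub hu₀meas)
  have hae : ∀ᵐ (y : EuclideanSpace ℝ (Fin n)), y ≠ 0 := by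
    rw [ae_iff, show {y : EuclideanSpace ℝ (Fin n) | ¬ y ≠ 0} = {0} by ext y; simp]
    exact volume_singleton_zero n (by omega)
  have hFnn : 0 ≤ᵐ[volume] fun y : EuclideanSpace ℝ (Fin n) =>
      phiWeight n σ y t * heatKernel n (x - y) (c*t) * (vinf y - u₀ y) := by
    filter_upwards [hae] with y hy
    have h1 := (hu₀ y hy).2
    exact mul_nonneg (mul_nonneg (phiWeight_nonneg n σ y t) (heatKernel_nonneg n _ hst))
      (by linarith)
  set A₁ : ℝ := Gc0 * t ^ (-(n:ℝ)/2) * (L * t ^ (σ/2)) with hA₁def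
  set A₂ : ℝ := Gc0 * t ^ (-(n:ℝ)/2) * (b * t ^ (σ/2)) with hA₂def
  set A₃ : ℝ := b * t ^ (-ℓ/2) with hA₃def
  have hA₁0 : 0 ≤ A₁ := by
    apply mul_nonneg (mul_nonneg hGc0pos.le (Real.rpow_nonneg ht0.le _))
    exact mul_nonneg hL0 (Real.rpow_nonneg ht0.le _)
  have hA₂0 : 0 ≤ A₂ := by positivity
  have hA₃0 : 0 ≤ A₃ := by positivity
  have hGceq : (4 * Real.pi * (c * t)) ^ (-(n:ℝ)/2) = Gc0 * t ^ (-(n:ℝ)/2) := by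
    rw [hGc0def, ← Real.mul_rpow (by positivity) ht0.le]
    congr 1
    ring
  have hGle : ∀ y : EuclideanSpace ℝ (Fin n),
      heatKernel n (x - y) (c*t) ≤ Gc0 * t ^ (-(n:ℝ)/2) := fun y => by
    rw [← hGceq]; exact heatKernel_le n _ hst
  have hsqrtpow : ∀ e : ℝ, (Real.sqrt t) ^ e = t ^ (e/2) := by
    intro e
    rw [Real.sqrt_eq_rpow, ← Real.rpow_mul ht0.le]
    congr 1
    ring
  have hφeq : ∀ y : EuclideanSpace ℝ (Fin n), ‖y‖ ≤ Real.sqrt t →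
      phiWeight n σ y t = t ^ (σ/2) * ‖y‖ ^ (-σ) := by
    intro y hyt
    rw [phiWeight, if_pos hyt, Real.div_rpow (Real.sqrt_nonneg t) (norm_nonneg y),
      hsqrtpow σ, Real.rpow_neg (norm_nonneg y), div_eq_mul_inv]
  have hwv : ∀ y : EuclideanSpace ℝ (Fin n), y ≠ 0 →
      vinf y - u₀ y ≤ L * ‖y‖ ^ (-q) := by
    intro y hy
    calc vinf y - u₀ y ≤ vinf y := by linarith [(hu₀ y hy).1]
      _ = L * ‖y‖ ^ (-q) := hvinf y
  have hwb : ∀ y : EuclideanSpace ℝ (Fin n), 1 ≤ ‖y‖ →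
      vinf y - u₀ y ≤ b * ‖y‖ ^ (-ℓ) := fun y h => by linarith [hu₀low y h]
  set ind₁ : EuclideanSpace ℝ (Fin n) → ENNReal := fun y =>
    (Metric.closedBall (0 : EuclideanSpace ℝ (Fin n)) 1).indicator
      (fun y => ENNReal.ofReal (‖y‖ ^ (-(σ+q)))) y with hind₁def
  set ind₂ : EuclideanSpace ℝ (Fin n) → ENNReal := fun y =>
    (Metric.closedBall (0 : EuclideanSpace ℝ (Fin n)) (Real.sqrt t)).indicator
      (fun y => ENNReal.ofReal (‖y‖ ^ (-(σ+ℓ)))) y with hind₂def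
  have hind₁meas : Measurable ind₁ := by
    apply Measurable.indicator _ measurableSet_closedBall
    fun_prop
  have hind₂meas : Measurable ind₂ := by
    apply Measurable.indicator _ measurableSet_closedBall
    fun_prop
  have hpt : ∀ᵐ y : EuclideanSpace ℝ (Fin n), ENNReal.ofReal
      (phiWeight n σ y t * heatKernel n (x - y) (c*t) * (vinf y - u₀ y)) ≤
      ENNReal.ofReal A₁ * ind₁ y + ENNReal.ofReal A₂ * ind₂ y +
        ENNReal.ofReal A₃ * ENNReal.ofReal (heatKernel n (x - y) (c*t)) := by
    filter_upwards [hae] with y hy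
    have hy0 : 0 < ‖y‖ := norm_pos_iff.2 hy
    have hφG0 : 0 ≤ phiWeight n σ y t * heatKernel n (x - y) (c*t) :=
      mul_nonneg (phiWeight_nonneg n σ y t) (heatKernel_nonneg n _ hst)
    by_cases hyt : ‖y‖ ≤ Real.sqrt t
    · have hφ := hφeq y hyt
      by_cases hy1 : ‖y‖ ≤ 1
      · have hF : phiWeight n σ y t * heatKernel n (x - y) (c*t) * (vinf y - u₀ y)
            ≤ A₁ * ‖y‖ ^ (-(σ+q)) := by
          calc phiWeight n σ y t * heatKernel n (x - y) (c*t) * (vinf y - u₀ y)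
              ≤ phiWeight n σ y t * heatKernel n (x - y) (c*t) * (L * ‖y‖ ^ (-q)) :=
                mul_le_mul_of_nonneg_left (hwv y hy) hφG0
            _ ≤ phiWeight n σ y t * (Gc0 * t ^ (-(n:ℝ)/2)) * (L * ‖y‖ ^ (-q)) := by
                apply mul_le_mul_of_nonneg_right _ (by positivity)
                exact mul_le_mul_of_nonneg_left (hGle y) (phiWeight_nonneg n σ y t)
            _ = A₁ * ‖y‖ ^ (-(σ+q)) := by
                rw [hφ, hA₁def, show -(σ+q) = -σ + -q by ring, Real.rpow_add hy0]
                ring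
        refine le_trans (ENNReal.ofReal_le_ofReal hF) ?_
        have heq : ENNReal.ofReal (A₁ * ‖y‖ ^ (-(σ+q))) = ENNReal.ofReal A₁ * ind₁ y := by
          rw [hind₁def]
          simp only
          rw [Set.indicator_of_mem (mem_closedBall_zero_iff.2 hy1),
            ENNReal.ofReal_mul hA₁0]
        rw [heq]
        exact le_add_right (le_add_right le_rfl)
      · have hy1' : 1 ≤ ‖y‖ := (not_le.1 hy1).le
        have hF : phiWeight n σ y t * heatKernel n (x - y) (c*t) * (vinf y - u₀ y)
            ≤ A₂ * ‖y‖ ^ (-(σ+ℓ)) := by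
          calc phiWeight n σ y t * heatKernel n (x - y) (c*t) * (vinf y - u₀ y)
              ≤ phiWeight n σ y t * heatKernel n (x - y) (c*t) * (b * ‖y‖ ^ (-ℓ)) :=
                mul_le_mul_of_nonneg_left (hwb y hy1') hφG0
            _ ≤ phiWeight n σ y t * (Gc0 * t ^ (-(n:ℝ)/2)) * (b * ‖y‖ ^ (-ℓ)) := by
                apply mul_le_mul_of_nonneg_right _ (by positivity)
                exact mul_le_mul_of_nonneg_left (hGle y) (phiWeight_nonneg n σ y t)
            _ = A₂ * ‖y‖ ^ (-(σ+ℓ)) := by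
                rw [hφ, hA₂def, show -(σ+ℓ) = -σ + -ℓ by ring, Real.rpow_add hy0]
                ring
        refine le_trans (ENNReal.ofReal_le_ofReal hF) ?_
        have heq : ENNReal.ofReal (A₂ * ‖y‖ ^ (-(σ+ℓ))) = ENNReal.ofReal A₂ * ind₂ y := by
          rw [hind₂def]
          simp only
          rw [Set.indicator_of_mem (mem_closedBall_zero_iff.2 hyt),
            ENNReal.ofReal_mul hA₂0]
        rw [heq]
        exact le_add_right le_add_self
    · have hφ1 : phiWeight n σ y t = 1 := by rw [phiWeight, if_neg hyt]
      have hy1' : 1 ≤ ‖y‖ := hsqrt1.trans (not_le.1 hyt).le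
      have h5 : ‖y‖ ^ (-ℓ) ≤ t ^ (-ℓ/2) := by
        have h6 := Real.rpow_le_rpow_of_nonpos hsq0 (not_le.1 hyt).le
          (neg_nonpos.2 hℓ0.le)
        rwa [hsqrtpow (-ℓ)] at h6
      have hF : phiWeight n σ y t * heatKernel n (x - y) (c*t) * (vinf y - u₀ y)
          ≤ A₃ * heatKernel n (x - y) (c*t) := by
        rw [hφ1, one_mul]
        calc heatKernel n (x - y) (c*t) * (vinf y - u₀ y)
            ≤ heatKernel n (x - y) (c*t) * (b * ‖y‖ ^ (-ℓ)) :=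
              mul_le_mul_of_nonneg_left (hwb y hy1') (heatKernel_nonneg n _ hst)
          _ ≤ heatKernel n (x - y) (c*t) * (b * t ^ (-ℓ/2)) := by
              apply mul_le_mul_of_nonneg_left _ (heatKernel_nonneg n _ hst)
              exact mul_le_mul_of_nonneg_left h5 hb.le
          _ = A₃ * heatKernel n (x - y) (c*t) := by rw [hA₃def]; ring
      refine le_trans (ENNReal.ofReal_le_ofReal hF) ?_
      rw [ENNReal.ofReal_mul hA₃0]
      exact le_add_self
  rw [MeasureTheory.integral_eq_lintegral_of_nonneg_ae hFnn hFmeas0.aestronglyMeasurable]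
  have hRHS0 : (0:ℝ) ≤ (K₁ + K₂ + b) * t ^ (-ℓ/2) := by
    apply mul_nonneg (by linarith) (Real.rpow_nonneg ht0.le _)
  apply ENNReal.toReal_le_of_le_ofReal hRHS0
  have est₁ : ∫⁻ y, ENNReal.ofReal A₁ * ind₁ y ≤ ENNReal.ofReal (K₁ * t ^ (-ℓ/2)) := by
    rw [lintegral_const_mul _ hind₁meas, hind₁def]
    simp only
    rw [lintegral_indicator measurableSet_closedBall]
    calc ENNReal.ofReal A₁ * ∫⁻ y in Metric.closedBall (0 : EuclideanSpace ℝ (Fin n)) 1,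
          ENNReal.ofReal (‖y‖ ^ (-(σ+q)))
        ≤ ENNReal.ofReal A₁ *
          (ENNReal.ofReal ((1:ℝ) ^ ((n:ℝ) - (σ+q)) * (1 + (σ+q)/((n:ℝ)-(σ+q)))) *
            ENNReal.ofReal vBr) := by
          rw [← hvB]
          exact mul_le_mul_right (lintegral_closedBall_rpow n hσqpos hσq one_pos) _
      _ = ENNReal.ofReal (A₁ * ((1 + (σ+q)/((n:ℝ)-(σ+q))) * vBr)) := by
          rw [Real.one_rpow, one_mul, ← ENNReal.ofReal_mul hpos₁,
            ← ENNReal.ofReal_mul hA₁0]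
      _ ≤ ENNReal.ofReal (K₁ * t ^ (-ℓ/2)) := by
          apply ENNReal.ofReal_le_ofReal
          have e1 : A₁ * ((1 + (σ+q)/((n:ℝ)-(σ+q))) * vBr)
              = K₁ * (t ^ (-(n:ℝ)/2) * t ^ (σ/2)) := by
            rw [hA₁def, hK₁def]; ring
          have e2 : t ^ (-(n:ℝ)/2) * t ^ (σ/2) = t ^ (-(n:ℝ)/2 + σ/2) :=
            (Real.rpow_add ht0 _ _).symm
          have e3 : t ^ (-(n:ℝ)/2 + σ/2) ≤ t ^ (-ℓ/2) :=
            Real.rpow_le_rpow_of_exponent_le ht (by linarith)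
          rw [e1, e2]
          exact mul_le_mul_of_nonneg_left e3 hK₁0
  have est₂ : ∫⁻ y, ENNReal.ofReal A₂ * ind₂ y ≤ ENNReal.ofReal (K₂ * t ^ (-ℓ/2)) := by
    rw [lintegral_const_mul _ hind₂meas, hind₂def]
    simp only
    rw [lintegral_indicator measurableSet_closedBall]
    calc ENNReal.ofReal A₂ * ∫⁻ y in Metric.closedBall (0 : EuclideanSpace ℝ (Fin n))
          (Real.sqrt t), ENNReal.ofReal (‖y‖ ^ (-(σ+ℓ)))
        ≤ ENNReal.ofReal A₂ *
          (ENNReal.ofReal ((Real.sqrt t) ^ ((n:ℝ) - (σ+ℓ)) * (1 + (σ+ℓ)/((n:ℝ)-(σ+ℓ)))) *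
            ENNReal.ofReal vBr) := by
          rw [← hvB]
          exact mul_le_mul_right (lintegral_closedBall_rpow n hσℓpos hσℓn hsq0) _
      _ = ENNReal.ofReal (A₂ * ((Real.sqrt t) ^ ((n:ℝ) - (σ+ℓ)) *
            (1 + (σ+ℓ)/((n:ℝ)-(σ+ℓ))) * vBr)) := by
          rw [← ENNReal.ofReal_mul (mul_nonneg (Real.rpow_nonneg (Real.sqrt_nonneg t) _) hpos₂),
            ← ENNReal.ofReal_mul hA₂0]
      _ ≤ ENNReal.ofReal (K₂ * t ^ (-ℓ/2)) := by
          apply ENNReal.ofReal_le_ofReal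
          rw [hsqrtpow ((n:ℝ) - (σ+ℓ))]
          have e1 : A₂ * (t ^ (((n:ℝ) - (σ+ℓ))/2) * (1 + (σ+ℓ)/((n:ℝ)-(σ+ℓ))) * vBr)
              = K₂ * (t ^ (-(n:ℝ)/2) * t ^ (σ/2) * t ^ (((n:ℝ) - (σ+ℓ))/2)) := by
            rw [hA₂def, hK₂def]; ring
          have e2 : t ^ (-(n:ℝ)/2) * t ^ (σ/2) * t ^ (((n:ℝ) - (σ+ℓ))/2) = t ^ (-ℓ/2) := by
            rw [← Real.rpow_add ht0, ← Real.rpow_add ht0]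
            congr 1
            ring
          rw [e1, e2]
  have est₃ : ∫⁻ y, ENNReal.ofReal A₃ * ENNReal.ofReal (heatKernel n (x - y) (c*t)) ≤
      ENNReal.ofReal (b * t ^ (-ℓ/2)) := by
    rw [lintegral_const_mul _ (by fun_prop : Measurable fun y : EuclideanSpace ℝ (Fin n) =>
        ENNReal.ofReal (heatKernel n (x - y) (c*t)))]
    rw [heatKernel_lintegral n x hst, mul_one, hA₃def]
  calc ∫⁻ y, ENNReal.ofReal
        (phiWeight n σ y t * heatKernel n (x - y) (c*t) * (vinf y - u₀ y))
      ≤ ∫⁻ y, (ENNReal.ofReal A₁ * ind₁ y + ENNReal.ofReal A₂ * ind₂ y +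
          ENNReal.ofReal A₃ * ENNReal.ofReal (heatKernel n (x - y) (c*t))) :=
        lintegral_mono_ae hpt
    _ = (∫⁻ y, ENNReal.ofReal A₁ * ind₁ y) + (∫⁻ y, ENNReal.ofReal A₂ * ind₂ y) +
          (∫⁻ y, ENNReal.ofReal A₃ * ENNReal.ofReal (heatKernel n (x - y) (c*t))) := by
        rw [lintegral_add_left (show Measurable fun y => ENNReal.ofReal A₁ * ind₁ y +
          ENNReal.ofReal A₂ * ind₂ y from (hind₁meas.const_mul _).add (hind₂meas.const_mul _)),
          lintegral_add_left (show Measurable fun y => ENNReal.ofReal A₁ * ind₁ y from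
            hind₁meas.const_mul _)]
    _ ≤ ENNReal.ofReal (K₁ * t ^ (-ℓ/2)) + ENNReal.ofReal (K₂ * t ^ (-ℓ/2)) +
          ENNReal.ofReal (b * t ^ (-ℓ/2)) :=
        add_le_add (add_le_add est₁ est₂) est₃
    _ = ENNReal.ofReal ((K₁ + K₂ + b) * t ^ (-ℓ/2)) := by
        rw [← ENNReal.ofReal_add (mul_nonneg hK₁0 (Real.rpow_nonneg ht0.le _))
          (mul_nonneg hK₂0 (Real.rpow_nonneg ht0.le _)),
          ← ENNReal.ofReal_add (by positivity) (mul_nonneg hb.le (Real.rpow_nonneg ht0.le _))]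
        congr 1
        ring

/-- Theorem 2.1: weighted convergence of the solution towards the singular steady state
`v_∞(x) = L|x|^{−2/(p−1)}` for initial data trapped between `v_∞ − b|x|^{−ℓ}` and `v_∞`. -/
theorem convergence_to_singular_state (n : ℕ) (hn : 11 ≤ n) (p : ℝ)
    (hp : ((n : ℝ) - 2 * Real.sqrt ((n : ℝ) - 1)) /
      ((n : ℝ) - 4 - 2 * Real.sqrt ((n : ℝ) - 1)) ≤ p)
    (σ L : ℝ)
    (hσ : σ = ((n : ℝ) - 2) / 2 -
      Real.sqrt (((n : ℝ) - 2) ^ 2 / 4 - (2 * p / (p - 1)) * ((n : ℝ) - 2 - 2 / (p - 1))))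
    (hL : L = ((2 / (p - 1)) * ((n : ℝ) - 2 - 2 / (p - 1))) ^ (1 / (p - 1)))
    (vinf : EuclideanSpace ℝ (Fin n) → ℝ)
    (hvinf : ∀ x : EuclideanSpace ℝ (Fin n), vinf x = L * ‖x‖ ^ (-(2 / (p - 1))))
    (b ℓ : ℝ) (hb : 0 < b) (hℓ : ℓ ∈ Set.Ioo σ ((n : ℝ) - σ))
    (u₀ : EuclideanSpace ℝ (Fin n) → ℝ) (hu₀meas : Measurable u₀)
    (hu₀ : ∀ x : EuclideanSpace ℝ (Fin n), x ≠ 0 → 0 ≤ u₀ x ∧ u₀ x ≤ vinf x)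
    (hu₀low : ∀ x : EuclideanSpace ℝ (Fin n), 1 ≤ ‖x‖ → vinf x - b * ‖x‖ ^ (-ℓ) ≤ u₀ x)
    (u : EuclideanSpace ℝ (Fin n) → ℝ → ℝ) (C₀ c : ℝ) (hC₀ : 0 < C₀) (hc : 1 < c)
    (hcomp : ∀ t > (0 : ℝ), ∀ x : EuclideanSpace ℝ (Fin n), x ≠ 0 →
      0 ≤ vinf x - u x t ∧
      vinf x - u x t ≤ C₀ * phiWeight n σ x t *
        ∫ y, phiWeight n σ y t * heatKernel n (x - y) (c * t) * (vinf y - u₀ y)) :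
    ∃ C > 0, ∀ t ≥ (1 : ℝ),
      (∀ x : EuclideanSpace ℝ (Fin n), 0 < ‖x‖ → ‖x‖ ≤ Real.sqrt t →
        ‖x‖ ^ σ * (vinf x - u x t) ≤ C * t ^ (-(ℓ - σ) / 2)) ∧
      (∀ x : EuclideanSpace ℝ (Fin n), Real.sqrt t ≤ ‖x‖ →
        vinf x - u x t ≤ C * t ^ (-ℓ / 2)) := by

  have hn' : (11:ℝ) ≤ (n:ℝ) := by exact_mod_cast hn
  set r := Real.sqrt ((n:ℝ) - 1) with hr
  have hr0 : 0 ≤ r := Real.sqrt_nonneg _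
  have hr2 : r ^ 2 = (n:ℝ) - 1 := Real.sq_sqrt (by linarith)
  have hden : 0 < (n:ℝ) - 4 - 2*r := by nlinarith
  have hp1 : 1 < p := by
    have h1 : 1 < ((n:ℝ) - 2*r) / ((n:ℝ) - 4 - 2*r) := by
      rw [lt_div_iff₀ hden]; linarith
    linarith
  have hp0 : 0 < p - 1 := by linarith
  have hub : 4 ≤ (p - 1) * ((n:ℝ) - 4 - 2*r) := by
    have h2 := (div_le_iff₀ hden).1 hp
    nlinarith
  have hqlt : 2/(p-1) < ((n:ℝ)-2)/2 := by
    rw [div_lt_div_iff₀ hp0 (by norm_num)]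
    nlinarith [mul_lt_mul_of_pos_left (show (n:ℝ)-4-2*r < (n:ℝ)-2 by linarith) hp0]
  have hlam : 0 < (2 * p / (p - 1)) * ((n : ℝ) - 2 - 2 / (p - 1)) := by
    apply mul_pos (by positivity)
    nlinarith [hqlt]
  have hσpos : 0 < σ := by
    rw [hσ]
    have h4 : Real.sqrt (((n:ℝ)-2)^2/4 - (2*p/(p-1))*((n:ℝ)-2-2/(p-1))) < ((n:ℝ)-2)/2 := by
      rw [Real.sqrt_lt' (by linarith)]
      nlinarith
    linarith
  have hσle : σ ≤ ((n:ℝ)-2)/2 := by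
    rw [hσ]
    linarith [Real.sqrt_nonneg (((n:ℝ)-2)^2/4 - (2*p/(p-1))*((n:ℝ)-2-2/(p-1)))]
  have hL0 : 0 ≤ L := by
    rw [hL]
    apply Real.rpow_nonneg
    apply mul_nonneg (by positivity)
    nlinarith [hqlt]
  obtain ⟨hσℓ, hℓn⟩ := hℓ
  have hq0 : (0:ℝ) < 2 / (p - 1) := by positivity
  have hqlt' : 2 / (p - 1) < ((n:ℝ) - 2) / 2 := hqlt
  obtain ⟨K, hK0, hkey⟩ := key_estimate n hn σ (2 / (p - 1)) L b ℓ c hσpos hσle hq0 hqlt'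
    hσℓ hℓn hb hc hL0 vinf u₀ hu₀meas hvinf hu₀ hu₀low
  have hCpos : (0:ℝ) < C₀ * K + 1 := by nlinarith [mul_nonneg hC₀.le hK0]
  refine ⟨C₀ * K + 1, hCpos, ?_⟩
  intro t ht
  have ht0 : (0:ℝ) < t := lt_of_lt_of_le one_pos ht
  have hsqrt1 : (1:ℝ) ≤ Real.sqrt t := by
    rw [show (1:ℝ) = Real.sqrt 1 from Real.sqrt_one.symm]
    exact Real.sqrt_le_sqrt ht
  have hsq0 : (0:ℝ) < Real.sqrt t := lt_of_lt_of_le one_pos hsqrt1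
  constructor
  · intro x hx hxt
    have hxne : x ≠ 0 := by
      intro h
      rw [h, norm_zero] at hx
      exact lt_irrefl _ hx
    obtain ⟨hge, hle⟩ := hcomp t ht0 x hxne
    set I : ℝ := ∫ y, phiWeight n σ y t * heatKernel n (x - y) (c * t) * (vinf y - u₀ y)
      with hIdef
    have hIle : I ≤ K * t ^ (-ℓ/2) := hkey t ht x
    have hφx : phiWeight n σ x t = t ^ (σ/2) * ‖x‖ ^ (-σ) := by
      have e1 : (Real.sqrt t) ^ σ = t ^ (σ/2) := by
        rw [Real.sqrt_eq_rpow, ← Real.rpow_mul ht0.le]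
        congr 1
        ring
      rw [phiWeight, if_pos hxt, Real.div_rpow (Real.sqrt_nonneg t) (norm_nonneg x), e1,
        Real.rpow_neg (norm_nonneg x), div_eq_mul_inv]
    have h1 : ‖x‖ ^ σ * ‖x‖ ^ (-σ) = 1 := by
      rw [← Real.rpow_add hx]
      simp
    calc ‖x‖ ^ σ * (vinf x - u x t)
        ≤ ‖x‖ ^ σ * (C₀ * phiWeight n σ x t * I) :=
          mul_le_mul_of_nonneg_left hle (Real.rpow_nonneg (norm_nonneg x) σ)
      _ = C₀ * t ^ (σ/2) * I := by
          rw [hφx, show ‖x‖ ^ σ * (C₀ * (t ^ (σ/2) * ‖x‖ ^ (-σ)) * I)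
            = C₀ * t ^ (σ/2) * I * (‖x‖ ^ σ * ‖x‖ ^ (-σ)) from by ring, h1, mul_one]
      _ ≤ C₀ * t ^ (σ/2) * (K * t ^ (-ℓ/2)) :=
          mul_le_mul_of_nonneg_left hIle
            (mul_nonneg hC₀.le (Real.rpow_nonneg ht0.le _))
      _ = (C₀ * K) * (t ^ (σ/2) * t ^ (-ℓ/2)) := by ring
      _ = (C₀ * K) * t ^ (-(ℓ - σ) / 2) := by
          rw [← Real.rpow_add ht0, show σ/2 + -ℓ/2 = -(ℓ - σ) / 2 from by ring]
      _ ≤ (C₀ * K + 1) * t ^ (-(ℓ - σ) / 2) :=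
          mul_le_mul_of_nonneg_right (by linarith) (Real.rpow_nonneg ht0.le _)
  · intro x hxt
    have hx0 : (0:ℝ) < ‖x‖ := lt_of_lt_of_le hsq0 hxt
    have hxne : x ≠ 0 := by
      intro h
      rw [h, norm_zero] at hx0
      exact lt_irrefl _ hx0
    obtain ⟨hge, hle⟩ := hcomp t ht0 x hxne
    set I : ℝ := ∫ y, phiWeight n σ y t * heatKernel n (x - y) (c * t) * (vinf y - u₀ y)
      with hIdef
    have hIle : I ≤ K * t ^ (-ℓ/2) := hkey t ht x
    have hφx : phiWeight n σ x t = 1 := by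
      rw [phiWeight]
      split_ifs with h
      · rw [le_antisymm h hxt, div_self (ne_of_gt hsq0), Real.one_rpow]
      · rfl
    rw [hφx, mul_one] at hle
    calc vinf x - u x t ≤ C₀ * I := hle
      _ ≤ C₀ * (K * t ^ (-ℓ/2)) := mul_le_mul_of_nonneg_left hIle hC₀.le
      _ = (C₀ * K) * t ^ (-ℓ/2) := by ring
      _ ≤ (C₀ * K + 1) * t ^ (-ℓ / 2) := by
          rw [show -ℓ/2 = -ℓ / 2 from rfl]
          exact mul_le_mul_of_nonneg_right (by linarith) (Real.rpow_nonneg ht0.le _)
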